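/- arXiv:1911.07796 — 5 statements merged into one kernel-verified Lean document; each statement's English description precedes it below -/
import Mathlib

section
/- Let R be an n×m matrix such that K_R(R) = {Rp : p ≥ 0} is a proper cone in ℝⁿ with every column of R nonzero. If there exists an m×m matrix P with all off-diagonal entries strictly positive such that AR = RP, then A satisfies the strict sub-tangentiality condition with respect to K_R(R): for all x ∈ K_R(R) \ {0} and y ∈ K_R(R)* \ {0} with ⟨y,x⟩ = 0, ⟨y,Ax⟩ > 0. -/
open Matrix Set

noncomputable section

/-- Dual cone of a set of vectors, w.r.t. the dot product. -/
def dualCone' {n : ℕ} (K : Set (Fin n → ℝ)) : Set (Fin n → ℝ) :=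
  {y | ∀ x ∈ K, 0 ≤ y ⬝ᵥ x}

/-- `K` is a proper cone: closed convex cone with nonempty interior containing no line. -/
def IsProperCone' {n : ℕ} (K : Set (Fin n → ℝ)) : Prop :=
  (∀ r₁ ∈ K, ∀ r₂ ∈ K, ∀ p₁ p₂ : ℝ, 0 ≤ p₁ → 0 ≤ p₂ → p₁ • r₁ + p₂ • r₂ ∈ K) ∧
  IsClosed K ∧ (interior K).Nonempty ∧ ∀ r ∈ K, r ≠ 0 → -r ∉ K

/-- Sub-tangentiality of `A` with respect to `K`. -/
def SubTang {n : ℕ} (A : Matrix (Fin n) (Fin n) ℝ) (K : Set (Fin n → ℝ)) : Prop :=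
  ∀ x ∈ K, ∀ y ∈ dualCone' K, y ⬝ᵥ x = 0 → 0 ≤ y ⬝ᵥ A.mulVec x

/-- Strict sub-tangentiality of `A` with respect to `K`. -/
def StrictSubTang {n : ℕ} (A : Matrix (Fin n) (Fin n) ℝ) (K : Set (Fin n → ℝ)) : Prop :=
  ∀ x ∈ K, x ≠ 0 → ∀ y ∈ dualCone' K, y ≠ 0 → y ⬝ᵥ x = 0 → 0 < y ⬝ᵥ A.mulVec x

/-- The polyhedral cone generated by the columns of `R` (R-representation). -/
def coneR {n m : ℕ} (R : Matrix (Fin n) (Fin m) ℝ) : Set (Fin n → ℝ) :=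
  {x | ∃ p : Fin m → ℝ, (∀ i, 0 ≤ p i) ∧ x = R.mulVec p}

theorem stmt3 {n m : ℕ} (R : Matrix (Fin n) (Fin m) ℝ)
    (hK : IsProperCone' (coneR R))
    (hcols : ∀ j, (fun i => R i j) ≠ (0 : Fin n → ℝ))
    (A : Matrix (Fin n) (Fin n) ℝ) (P : Matrix (Fin m) (Fin m) ℝ)
    (hP : ∀ i j, i ≠ j → 0 < P i j) (hAR : A * R = R * P) :
    StrictSubTang A (coneR R) := by
  classical
  obtain ⟨hcone, hclosed, hint, hline⟩ := hK
  rintro x ⟨p, hp, rfl⟩ hx0 y hy hy0 hyx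
  set q := R.vecMul y with hq
  have hqnn : ∀ j, 0 ≤ q j := by
    intro j
    have hcol : R.mulVec (Pi.single j 1) ∈ coneR R :=
      ⟨Pi.single j 1, fun i => by by_cases h : i = j <;> simp [h, Pi.single_apply], rfl⟩
    have h2 := hy _ hcol
    rwa [Matrix.dotProduct_mulVec, dotProduct_single, mul_one] at h2
  have hsum0 : q ⬝ᵥ p = 0 := by rwa [Matrix.dotProduct_mulVec] at hyx
  have hqp : ∀ j, q j * p j = 0 := by
    intro j
    have h1 : ∀ j ∈ Finset.univ, 0 ≤ q j * p j := fun j _ => mul_nonneg (hqnn j) (hp j)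
    exact (Finset.sum_eq_zero_iff_of_nonneg h1).mp hsum0 j (Finset.mem_univ j)
  have hp0 : ∃ k0, 0 < p k0 := by
    by_contra h
    push_neg at h
    have hpz : p = 0 := funext fun k => le_antisymm (h k) (hp k)
    exact hx0 (by simp [hpz])
  obtain ⟨k0, hk0⟩ := hp0
  have hq0 : ∃ j0, 0 < q j0 := by
    by_contra h
    push_neg at h
    have hqz : q = 0 := funext fun j => le_antisymm (h j) (hqnn j)
    have hyK : ∀ v ∈ coneR R, y ⬝ᵥ v = 0 := by
      rintro v ⟨s, hs, rfl⟩
      rw [Matrix.dotProduct_mulVec, ← hq, hqz, zero_dotProduct]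
    obtain ⟨u, hu⟩ := hint
    obtain ⟨ε, hε, hball⟩ := Metric.mem_nhds_iff.mp (mem_interior_iff_mem_nhds.mp hu)
    set c : ℝ := ε / (2 * (‖y‖ + 1)) with hc
    have hcpos : 0 < c := div_pos hε (by positivity)
    have hmem : u + c • y ∈ coneR R := by
      apply hball
      rw [Metric.mem_ball, dist_eq_norm, add_sub_cancel_left, norm_smul]
      have h1 : ‖c‖ = c := abs_of_pos hcpos
      rw [h1]
      have h2 : c * ‖y‖ ≤ c * (‖y‖ + 1) := by nlinarith [norm_nonneg y]
      have h3 : c * (‖y‖ + 1) = ε / 2 := by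
        rw [hc]; field_simp
      linarith
    have hu0 : y ⬝ᵥ u = 0 := hyK u (interior_subset hu)
    have hall : y ⬝ᵥ (u + c • y) = 0 := hyK _ hmem
    rw [dotProduct_add, hu0, zero_add, dotProduct_smul, smul_eq_mul] at hall
    have hyy : y ⬝ᵥ y = 0 := by
      rcases mul_eq_zero.mp hall with h' | h'
      · exact absurd h' (ne_of_gt hcpos)
      · exact h'
    exact hy0 (dotProduct_self_eq_zero.mp hyy)
  obtain ⟨j0, hj0⟩ := hq0
  have hpj0 : p j0 = 0 := by
    have h1 := hqp j0
    rcases mul_eq_zero.mp h1 with h' | h'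
    · exact absurd h' (ne_of_gt hj0)
    · exact h'
  have hj0k0 : j0 ≠ k0 := by
    intro h
    rw [h] at hpj0
    linarith
  have key : y ⬝ᵥ A.mulVec (R.mulVec p) = q ⬝ᵥ P.mulVec p := by
    rw [Matrix.mulVec_mulVec, hAR, ← Matrix.mulVec_mulVec, Matrix.dotProduct_mulVec]
  rw [key]
  have hterm : ∀ j, 0 ≤ q j → p j = 0 → 0 ≤ ∑ k, P j k * p k := by
    intro j _ hpj
    apply Finset.sum_nonneg
    intro k _
    by_cases hkj : k = j
    · rw [hkj, hpj, mul_zero]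
    · exact mul_nonneg (hP j k (fun hh => hkj hh.symm)).le (hp k)
  have expand : q ⬝ᵥ P.mulVec p = ∑ j, q j * ∑ k, P j k * p k := by
    simp [dotProduct, Matrix.mulVec]
  rw [expand]
  refine Finset.sum_pos' (fun j _ => ?_) ⟨j0, Finset.mem_univ j0, ?_⟩
  ·
    rcases eq_or_lt_of_le (hqnn j) with h' | h'
    · rw [← h', zero_mul]
    · have hpj : p j = 0 := by
        rcases mul_eq_zero.mp (hqp j) with h'' | h''
        · exact absurd h'' (ne_of_gt h')
        · exact h''
      exact mul_nonneg h'.le (hterm j (hqnn j) hpj)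
  · apply mul_pos hj0
    refine Finset.sum_pos' (fun k _ => ?_) ⟨k0, Finset.mem_univ k0, ?_⟩
    ·
      by_cases hkj : k = j0
      · rw [hkj, hpj0, mul_zero]
      · exact mul_nonneg (hP j0 k (fun hh => hkj hh.symm)).le (hp k)
    · exact mul_pos (hP j0 k0 hj0k0) hk0
end
end

section
/- Let R, R' be n×m matrices and M an m×m matrix with 1ᵀM = 1ᵀ, nonpositive off-diagonal entries, and R'' = R'M. Then K_R(R') ⊆ K_R(R''), i.e., every conic combination of the columns of R' is a conic combination of the columns of R''. -/
open Matrix Set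

noncomputable section

section Aux
attribute [local instance] Matrix.linftyOpNormedRing Matrix.linftyOpNormedAlgebra

private lemma aux_pow_nonneg {m : ℕ} (X : Matrix (Fin m) (Fin m) ℝ)
    (hX : ∀ i j, 0 ≤ X i j) : ∀ k : ℕ, ∀ i j, 0 ≤ (X ^ k) i j := by
  intro k
  induction k with
  | zero =>
    intro i j
    simp only [pow_zero]
    by_cases h : i = j <;> simp [one_apply, h]
  | succ k ih =>
    intro i j
    rw [pow_succ, Matrix.mul_apply]
    exact Finset.sum_nonneg fun l _ => mul_nonneg (ih i l) (hX l j)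

private lemma aux_solve {m : ℕ} (M : Matrix (Fin m) (Fin m) ℝ)
    (hcol : ∀ j, ∑ i, M i j = 1)
    (hoff : ∀ i j, i ≠ j → M i j ≤ 0)
    (p : Fin m → ℝ) (hp : ∀ i, 0 ≤ p i) :
    ∃ q : Fin m → ℝ, (∀ i, 0 ≤ q i) ∧ M.mulVec q = p := by
  classical
  set s : ℝ := 1 + ∑ j, ∑ i ∈ Finset.univ \ {j}, (-M i j) with hs
  have hterm : ∀ j, 0 ≤ ∑ i ∈ Finset.univ \ {j}, (-M i j) := by
    intro j
    refine Finset.sum_nonneg fun i hi => ?_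
    simp only [Finset.mem_sdiff, Finset.mem_singleton] at hi
    linarith [hoff i j hi.2]
  have hs1 : (1:ℝ) ≤ s := by
    have : 0 ≤ ∑ j, ∑ i ∈ Finset.univ \ {j}, (-M i j) :=
      Finset.sum_nonneg fun j _ => hterm j
    linarith
  have hspos : (0:ℝ) < s := by linarith
  have hdiag_le : ∀ j, M j j ≤ s := by
    intro j
    have hsplit : ∑ i, M i j = M j j + ∑ i ∈ Finset.univ \ {j}, M i j := by
      rw [add_comm, Finset.sum_sdiff_eq_sub (by simp), Finset.sum_singleton]; ring
    have h1 : M j j = 1 + ∑ i ∈ Finset.univ \ {j}, (-M i j) := by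
      have hc := hcol j
      rw [hsplit] at hc
      rw [Finset.sum_neg_distrib]
      linarith
    have h2 : ∑ i ∈ Finset.univ \ {j}, (-M i j)
        ≤ ∑ j', ∑ i ∈ Finset.univ \ {j'}, (-M i j') :=
      Finset.single_le_sum (fun j' _ => hterm j') (Finset.mem_univ j)
    rw [h1, hs]; linarith
  set B : Matrix (Fin m) (Fin m) ℝ := s • (1 : Matrix (Fin m) (Fin m) ℝ) - M with hB
  have hBnn : ∀ i j, 0 ≤ B i j := by
    intro i j
    by_cases h : i = j
    · subst h
      simp only [hB, Matrix.sub_apply, Matrix.smul_apply, one_apply_eq, smul_eq_mul, mul_one]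
      linarith [hdiag_le i]
    · simp only [hB, Matrix.sub_apply, Matrix.smul_apply, one_apply_ne h, smul_eq_mul, mul_zero]
      linarith [hoff i j h]
  have hBcol : ∀ j, ∑ i, B i j = s - 1 := by
    intro j
    simp only [hB, Matrix.sub_apply, Matrix.smul_apply, smul_eq_mul, Finset.sum_sub_distrib, hcol j]
    congr 1
    rw [Finset.sum_eq_single j] <;> simp +contextual [one_apply]
  set X : Matrix (Fin m) (Fin m) ℝ := s⁻¹ • Bᵀ with hX
  have hXnn : ∀ i j, 0 ≤ X i j := fun i j => by
    simpa [hX] using mul_nonneg (inv_nonneg.2 hspos.le) (hBnn j i)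
  have hXrow : ∀ i, ∑ j, X i j = 1 - s⁻¹ := by
    intro i
    have : ∑ j, X i j = s⁻¹ * ∑ j, B j i := by
      simp [hX, Finset.mul_sum]
    rw [this, hBcol i, mul_sub, inv_mul_cancel₀ hspos.ne', mul_one]
  have hXnorm : ‖X‖ < 1 := by
    have hinv1 : s⁻¹ ≤ 1 := inv_le_one_of_one_le₀ hs1
    have hinvpos : 0 < s⁻¹ := inv_pos.2 hspos
    have hnn : ‖X‖₊ ≤ ⟨1 - s⁻¹, by linarith⟩ := by
      rw [Matrix.linfty_opNNNorm_def]
      refine Finset.sup_le fun i _ => ?_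
      apply NNReal.coe_le_coe.mp
      push_cast
      calc ∑ j, (‖X i j‖₊ : ℝ) = ∑ j, X i j := by
            refine Finset.sum_congr rfl fun j _ => ?_
            rw [coe_nnnorm, Real.norm_eq_abs, abs_of_nonneg (hXnn i j)]
        _ = 1 - s⁻¹ := hXrow i
        _ ≤ 1 - s⁻¹ := le_rfl
    calc ‖X‖ = (‖X‖₊ : ℝ) := rfl
      _ ≤ 1 - s⁻¹ := by exact_mod_cast hnn
      _ < 1 := by linarith
  have hsummable : Summable fun k : ℕ => X ^ k := summable_geometric_of_norm_lt_one hXnorm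
  set N : Matrix (Fin m) (Fin m) ℝ := ∑' k : ℕ, X ^ k with hN
  have hNnn : ∀ i j, 0 ≤ N i j := by
    intro i j
    have hf : ∀ (Y : Matrix (Fin m) (Fin m) ℝ), Y i j =
        ((LinearMap.proj (R := ℝ) j).comp (LinearMap.proj (R := ℝ) (φ := fun _ : Fin m => Fin m → ℝ) i)
          : Matrix (Fin m) (Fin m) ℝ →ₗ[ℝ] ℝ) Y := fun _ => by rfl
    have hcont : Continuous
        (((LinearMap.proj (R := ℝ) j).comp (LinearMap.proj (R := ℝ) (φ := fun _ : Fin m => Fin m → ℝ) i)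
          : Matrix (Fin m) (Fin m) ℝ →ₗ[ℝ] ℝ)) :=
      LinearMap.continuous_of_finiteDimensional _
    have : N i j = ∑' k : ℕ, (X ^ k) i j := by
      rw [hf N, hN]
      exact (ContinuousLinearMap.mk _ hcont : Matrix (Fin m) (Fin m) ℝ →L[ℝ] ℝ).map_tsum
        hsummable
    rw [this]
    exact tsum_nonneg fun k => aux_pow_nonneg X hXnn k i j
  have hNinv : N * (1 - X) = 1 := geom_series_mul_neg X hXnorm
  have hM : M = s • ((1 : Matrix (Fin m) (Fin m) ℝ) - Xᵀ) := by
    have hXT : Xᵀ = s⁻¹ • B := by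
      rw [hX, Matrix.transpose_smul, Matrix.transpose_transpose]
    rw [hXT, smul_sub, smul_smul, mul_inv_cancel₀ hspos.ne', one_smul, hB]
    abel
  have hMN : M * (s⁻¹ • Nᵀ) = 1 := by
    have h1 : ((1 : Matrix (Fin m) (Fin m) ℝ) - Xᵀ) * Nᵀ = 1 := by
      have : ((1 : Matrix (Fin m) (Fin m) ℝ) - Xᵀ) * Nᵀ = (N * (1 - X))ᵀ := by
        rw [Matrix.transpose_mul, Matrix.transpose_sub, Matrix.transpose_one]
      rw [this, hNinv, Matrix.transpose_one]
    rw [hM, Matrix.smul_mul, Matrix.mul_smul, smul_smul, mul_inv_cancel₀ hspos.ne',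
      one_smul, h1]
  refine ⟨(s⁻¹ • Nᵀ).mulVec p, ?_, ?_⟩
  · intro i
    rw [Matrix.mulVec, dotProduct]
    refine Finset.sum_nonneg fun j _ => ?_
    have : (0:ℝ) ≤ (s⁻¹ • Nᵀ) i j := by
      simpa using mul_nonneg (inv_nonneg.2 hspos.le) (hNnn j i)
    exact mul_nonneg this (hp j)
  · rw [Matrix.mulVec_mulVec, hMN, Matrix.one_mulVec]

end Aux


theorem stmt8 {n m : ℕ} (R R' : Matrix (Fin n) (Fin m) ℝ)
    (M : Matrix (Fin m) (Fin m) ℝ)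
    (hcol : ∀ j, ∑ i, M i j = 1)
    (hoff : ∀ i j, i ≠ j → M i j ≤ 0)
    (R'' : Matrix (Fin n) (Fin m) ℝ) (hR'' : R'' = R' * M) :
    coneR R' ⊆ coneR R'' := by
  rintro x ⟨p, hp, rfl⟩
  obtain ⟨q, hq, hMq⟩ := aux_solve M hcol hoff p hp
  exact ⟨q, hq, by rw [hR'', ← Matrix.mulVec_mulVec, hMq]⟩
end
end

section
/- If K_H(H) = {x ∈ ℝⁿ : Hx ≥ 0} is a proper cone and there exists a matrix P with nonnegative off-diagonal entries such that HA = PH, then A satisfies the sub-tangentiality condition with respect to K_H(H). -/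
open Matrix Set

noncomputable section

/-- All off-diagonal entries of `P` are nonnegative. -/
def OffdiagNonneg {m : ℕ} (P : Matrix (Fin m) (Fin m) ℝ) : Prop :=
  ∀ i j, i ≠ j → 0 ≤ P i j

/-- The polyhedral cone `{x : H x ≥ 0}` (H-representation). -/
def coneH {n k : ℕ} (H : Matrix (Fin k) (Fin n) ℝ) : Set (Fin n → ℝ) :=
  {x | ∀ i, 0 ≤ H.mulVec x i}

theorem stmt10 {n k : ℕ} (H : Matrix (Fin k) (Fin n) ℝ)
    (hK : IsProperCone' (coneH H))
    (A : Matrix (Fin n) (Fin n) ℝ) (P : Matrix (Fin k) (Fin k) ℝ)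
    (hP : OffdiagNonneg P) (hHA : H * A = P * H) :
    SubTang A (coneH H) := by
  classical
  intro x hx y hy hyx
  set u := H.mulVec x with hu
  set v := P.mulVec u with hv
  have hxu : ∀ i, 0 ≤ u i := hx
  have hHAx : H.mulVec (A.mulVec x) = v := by
    rw [hv, hu, Matrix.mulVec_mulVec, Matrix.mulVec_mulVec, hHA]
  have hkey : ∀ i, u i = 0 → 0 ≤ v i := by
    intro i hui
    have hvi : v i = ∑ j, P i j * u j := rfl
    rw [hvi]
    apply Finset.sum_nonneg
    intro j _
    by_cases hji : j = i
    · subst hji; simp [hui]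
    · exact mul_nonneg (hP i j (Ne.symm hji)) (hxu j)
  set g : Fin k → ℝ := fun i => if v i < 0 then u i / (-(v i)) else 1 with hg
  have hgpos : ∀ i, 0 < g i := by
    intro i
    by_cases h : v i < 0
    · have hu0 : 0 < u i := by
        rcases lt_or_eq_of_le (hxu i) with h' | h'
        · exact h'
        · exact absurd (hkey i h'.symm) (not_le.mpr h)
      simp only [hg, if_pos h]
      exact div_pos hu0 (neg_pos.mpr h)
    · simp [hg, h]
  set s : Finset ℝ := insert (1:ℝ) (Finset.image g Finset.univ) with hs
  have hsne : s.Nonempty := ⟨1, Finset.mem_insert_self _ _⟩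
  set t := s.min' hsne with ht
  have ht_pos : 0 < t := by
    have hmem := s.min'_mem hsne
    rcases Finset.mem_insert.mp hmem with h | h
    · rw [← ht] at h; rw [h]; norm_num
    · obtain ⟨i, _, hi⟩ := Finset.mem_image.mp h
      rw [← ht] at hi; rw [← hi]; exact hgpos i
  have ht_le : ∀ i, t ≤ g i := by
    intro i
    apply Finset.min'_le
    exact Finset.mem_insert_of_mem (Finset.mem_image.mpr ⟨i, Finset.mem_univ i, rfl⟩)
  have hmemK : x + t • A.mulVec x ∈ coneH H := by
    intro i
    have : H.mulVec (x + t • A.mulVec x) i = u i + t * v i := by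
      rw [Matrix.mulVec_add, Matrix.mulVec_smul, hHAx]
      simp [hu]
    rw [this]
    by_cases h : v i < 0
    · have hle : t ≤ u i / (-(v i)) := by
        have := ht_le i
        simpa [hg, if_pos h] using this
      have hneg : (0:ℝ) < -(v i) := neg_pos.mpr h
      have : t * (-(v i)) ≤ u i := by
        rw [← le_div_iff₀ hneg] at *
        exact hle
      nlinarith
    · push_neg at h
      have := mul_nonneg ht_pos.le h
      linarith [hxu i]
  have h0 := hy _ hmemK
  have hdot : y ⬝ᵥ (x + t • A.mulVec x) = t * (y ⬝ᵥ A.mulVec x) := by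
    rw [dotProduct_add, dotProduct_smul, hyx]
    simp [smul_eq_mul]
  rw [hdot] at h0
  nlinarith
end
end

section
/- Let K be a proper cone in ℝⁿ and A a matrix satisfying strict sub-tangentiality with respect to K. Suppose r̄ is an eigenvector of A with real eigenvalue λ and r̄ ∈ K \ {0}. Then r̄ ∈ int(K) or, if r̄ lies on the boundary of K, a contradiction arises; hence every eigenvector of A lying in K \ {0} must lie in the interior of K. -/
open Matrix Set

noncomputable section

theorem stmt14 {n : ℕ} (K : Set (Fin n → ℝ)) (hK : IsProperCone' K)
    (A : Matrix (Fin n) (Fin n) ℝ) (hA : StrictSubTang A K)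
    (lam : ℝ) (rbar : Fin n → ℝ) (heig : A.mulVec rbar = lam • rbar)
    (hmem : rbar ∈ K) (hne : rbar ≠ 0) :
    rbar ∈ interior K := by
  obtain ⟨hcone, hclosed, hint, hline⟩ := hK
  by_contra hnotint
  have hconv : Convex ℝ K := by
    intro r₁ h₁ r₂ h₂ p₁ p₂ hp₁ hp₂ _
    exact hcone r₁ h₁ r₂ h₂ p₁ p₂ hp₁ hp₂
  have h0 : (0 : Fin n → ℝ) ∈ K := by
    obtain ⟨r, hr⟩ := hint
    have := hcone r (interior_subset hr) r (interior_subset hr) 0 0 le_rfl le_rfl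
    simpa using this
  -- scaling: t • x ∈ K for x ∈ K, t ≥ 0
  have hscale : ∀ x ∈ K, ∀ t : ℝ, 0 ≤ t → t • x ∈ K := by
    intro x hx t ht
    have := hcone x hx x hx t 0 ht le_rfl
    simpa using this
  -- supporting hyperplane at rbar
  obtain ⟨f, hf⟩ := geometric_hahn_banach_open_point hconv.interior isOpen_interior hnotint
  -- f ≤ f rbar on K (by continuity / convex combination with interior points)
  have hle : ∀ x ∈ K, f x ≤ f rbar := by
    intro x hx
    obtain ⟨a, ha⟩ := hint
    have key : ∀ t : ℝ, t ∈ Set.Ioc (0:ℝ) 1 → (1 - t) * f x + t * f a ≤ f rbar := by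
      intro t ⟨ht0, ht1⟩
      have hmem' : (1 - t) • x + t • a ∈ interior K :=
        hconv.combo_closure_interior_mem_interior (subset_closure hx) ha
          (by linarith) ht0 (by ring)
      have := (hf _ hmem').le
      simpa [f.map_add, f.map_smul, smul_eq_mul] using this
    have htend : Filter.Tendsto (fun t : ℝ => (1 - t) * f x + t * f a)
        (nhdsWithin 0 (Set.Ioi (0:ℝ))) (nhds (f x)) := by
      have hc : Continuous (fun t : ℝ => (1 - t) * f x + t * f a) := by continuity
      have h := (hc.tendsto 0).mono_left (nhdsWithin_le_nhds (s := Set.Ioi (0:ℝ)))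
      simpa using h
    refine le_of_tendsto htend ?_
    filter_upwards [Ioc_mem_nhdsGT_of_mem (by norm_num : (0:ℝ) ∈ Set.Ico (0:ℝ) 1)] with t ht
    exact key t ht
  have hfr_ge : 0 ≤ f rbar := by
    have := hle 0 h0
    simpa using this
  -- f ≤ 0 on K
  have hfK : ∀ x ∈ K, f x ≤ 0 := by
    intro x hx
    by_contra hpos
    push_neg at hpos
    have ht0 : (0:ℝ) ≤ (f rbar + 1) / f x := by positivity
    have ht : f rbar < ((f rbar + 1) / f x) * f x := by
      rw [div_mul_cancel₀ _ (ne_of_gt hpos)]; linarith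
    have := hle (((f rbar + 1) / f x) • x) (hscale x hx _ ht0)
    rw [f.map_smul, smul_eq_mul] at this
    linarith
  have hfr0 : f rbar = 0 := le_antisymm (hfK rbar hmem) hfr_ge
  -- build the dual vector y
  set y : Fin n → ℝ := fun i => -(f (Pi.single i 1)) with hy
  have hyx : ∀ x : Fin n → ℝ, y ⬝ᵥ x = -(f x) := by
    intro x
    have hx : x = ∑ i, x i • (Pi.single i 1 : Fin n → ℝ) := by
      funext j
      simp [Finset.sum_apply, Pi.single_apply, Finset.sum_ite_eq', mul_comm]
    calc y ⬝ᵥ x = ∑ i, -(x i * f (Pi.single i 1)) := by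
          simp only [dotProduct, hy, neg_mul]
          exact Finset.sum_congr rfl fun i _ => by ring
      _ = -(f (∑ i, x i • (Pi.single i 1 : Fin n → ℝ))) := by
          rw [map_sum]
          simp only [f.map_smul, smul_eq_mul]
          rw [← Finset.sum_neg_distrib]
      _ = -(f x) := by rw [← hx]
  have hydual : y ∈ dualCone' K := by
    intro x hx
    rw [hyx]
    linarith [hfK x hx]
  have hyne : y ≠ 0 := by
    obtain ⟨a, ha⟩ := hint
    have hfa : f a < f rbar := hf a ha
    intro h
    have : y ⬝ᵥ a = 0 := by rw [h]; simp
    rw [hyx] at this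
    rw [hfr0] at hfa
    linarith
  have hyr : y ⬝ᵥ rbar = 0 := by rw [hyx, hfr0]; ring
  have hstrict := hA rbar hmem hne y hydual hyne hyr
  rw [heig, hyx] at hstrict
  rw [f.map_smul, smul_eq_mul, hfr0, mul_zero] at hstrict
  simp at hstrict
end
end

section
/- Suppose the n×n matrix A leaves the proper cone K invariant in the sense of sub-tangentiality (x ∈ K, y ∈ K*, ⟨y,x⟩ = 0 ⟹ ⟨y,Ax⟩ ≥ 0). Then for every t ≥ 0 and every x₀ ∈ K, the solution x(t) = exp(tA)x₀ of ẋ = Ax satisfies x(t) ∈ K. (Forward invariance of closed convex cones under sub-tangential linear flows.) -/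
open Matrix Set RealInnerProductSpace

noncomputable section

private def mvL17 {n : ℕ} (x₀ : Fin n → ℝ) : Matrix (Fin n) (Fin n) ℝ →ₗ[ℝ] (Fin n → ℝ) where
  toFun M := M.mulVec x₀
  map_add' M N := Matrix.add_mulVec M N x₀
  map_smul' c M := Matrix.smul_mulVec c M x₀

private lemma hasDerivAt_expMulVec17 {n : ℕ} (A : Matrix (Fin n) (Fin n) ℝ) (x₀ : Fin n → ℝ)
    (t : ℝ) :
    HasDerivAt (fun u : ℝ => (NormedSpace.exp (u • A)).mulVec x₀)
      (A.mulVec ((NormedSpace.exp (t • A)).mulVec x₀)) t := by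
  letI : SeminormedRing (Matrix (Fin n) (Fin n) ℝ) := Matrix.linftyOpSemiNormedRing
  letI : NormedRing (Matrix (Fin n) (Fin n) ℝ) := Matrix.linftyOpNormedRing
  letI : NormedAlgebra ℝ (Matrix (Fin n) (Fin n) ℝ) := Matrix.linftyOpNormedAlgebra
  have h := hasDerivAt_exp_smul_const' (𝕂 := ℝ) A t
  have h2 := ((mvL17 x₀).toContinuousLinearMap.hasFDerivAt.comp_hasDerivAt t h)
  rw [Matrix.mulVec_mulVec]; exact h2

theorem stmt17 {n : ℕ} (K : Set (Fin n → ℝ)) (hK : IsProperCone' K)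
    (A : Matrix (Fin n) (Fin n) ℝ) (hA : SubTang A K) :
    ∀ t : ℝ, 0 ≤ t → ∀ x₀ ∈ K, (NormedSpace.exp (t • A)).mulVec x₀ ∈ K := by
  intro T hT x₀ hx₀
  set L := PiLp.continuousLinearEquiv 2 ℝ (fun _ : Fin n => ℝ) with hLdef
  set K' : Set (EuclideanSpace ℝ (Fin n)) := ⇑L ⁻¹' K with hK'def
  -- basic cone facts
  obtain ⟨k₀, hk₀i⟩ := hK.2.2.1
  have hk₀ : k₀ ∈ K := interior_subset hk₀i
  have hzero : (0 : Fin n → ℝ) ∈ K := by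
    simpa using hK.1 k₀ hk₀ k₀ hk₀ 0 0 le_rfl le_rfl
  have hsmul : ∀ c : ℝ, 0 ≤ c → ∀ v ∈ K, c • v ∈ K := fun c hc v hv => by
    simpa using hK.1 v hv v hv c 0 hc le_rfl
  have hconv' : Convex ℝ K' := by
    intro v hv w hw a b ha hb hab
    have := hK.1 (L v) hv (L w) hw a b ha hb
    simpa [hK'def, map_add, _root_.map_smul] using this
  have hclosed' : IsClosed K' := hK.2.1.preimage L.continuous
  have hne' : K'.Nonempty := ⟨L.symm k₀, by simp [hK'def, hk₀]⟩
  -- dot product bridge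
  have hdot : ∀ v w : EuclideanSpace ℝ (Fin n), (L v) ⬝ᵥ (L w) = ⟪v, w⟫ := by
    intro v w; simp [hLdef, PiLp.inner_apply, dotProduct, PiLp.coe_continuousLinearEquiv, mul_comm]
  -- the matrix as an operator on Euclidean space
  set B : EuclideanSpace ℝ (Fin n) →L[ℝ] EuclideanSpace ℝ (Fin n) :=
    LinearMap.toContinuousLinearMap (Matrix.toEuclideanLin A) with hBdef
  have hB : ∀ v, B v = L.symm (A.mulVec (L v)) := by
    intro v; simp [hBdef, hLdef, Matrix.toEuclideanLin_apply, PiLp.coe_continuousLinearEquiv]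
  set C : ℝ := ‖B‖ with hCdef
  -- trajectory
  set x : ℝ → EuclideanSpace ℝ (Fin n) :=
    fun t => L.symm ((NormedSpace.exp (t • A)).mulVec x₀) with hxdef
  have hx : ∀ t, HasDerivAt x (B (x t)) t := by
    intro t
    have h := hasDerivAt_expMulVec17 A x₀ t
    have h2 := (L.symm.toContinuousLinearMap.hasFDerivAt.comp_hasDerivAt t h)
    have : B (x t) = L.symm (A.mulVec ((NormedSpace.exp (t • A)).mulVec x₀)) := by
      rw [hB]; simp [hxdef]
    rw [this]
    exact h2
  have hxc : Continuous x := by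
    rw [continuous_iff_continuousAt]; exact fun t => (hx t).continuousAt
  -- projections
  choose p hpK hp using
    exists_norm_eq_iInf_of_complete_convex hne' (hclosed'.isComplete) hconv'
  have hinf : ∀ u, Metric.infDist u K' = ‖u - p u‖ := by
    intro u
    rw [Metric.infDist_eq_iInf, hp u]
    simp [dist_eq_norm]
  have hchar : ∀ u, ∀ w ∈ K', ⟪u - p u, w - p u⟫ ≤ 0 := fun u =>
    (norm_eq_iInf_iff_real_inner_le_zero hconv' (hpK u)).1 (hp u)
  have horth : ∀ u, ⟪u - p u, p u⟫ = 0 := by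
    intro u
    have h0 : (0 : EuclideanSpace ℝ (Fin n)) ∈ K' := by simp [hK'def, hzero]
    have h1 := hchar u 0 h0
    have h2p : (2 : ℝ) • p u ∈ K' := by
      have := hsmul 2 (by norm_num) (L (p u)) (hpK u)
      simpa [hK'def, _root_.map_smul] using this
    have h2 := hchar u ((2 : ℝ) • p u) h2p
    rw [zero_sub, inner_neg_right] at h1
    have h3 : (2 : ℝ) • p u - p u = p u := by
      rw [two_smul]; abel
    rw [h3] at h2
    linarith
  have hdual : ∀ u, ∀ w ∈ K', ⟪u - p u, w⟫ ≤ 0 := by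
    intro u w hw
    have := hchar u w hw
    rw [inner_sub_right, horth u, sub_zero] at this
    exact this
  -- the Lyapunov-type function
  set f : ℝ → ℝ := fun t => (Metric.infDist (x t) K') ^ 2 with hfdef
  set f' : ℝ → ℝ := fun t => 2 * ⟪x t - p (x t), B (x t)⟫ with hf'def
  have hfc : ContinuousOn f (Icc 0 T) :=
    (((Metric.continuous_infDist_pt K').comp hxc).pow 2).continuousOn
  -- key estimate from sub-tangentiality
  have hbound : ∀ t, f' t ≤ 2 * C * f t := by
    intro t
    set u := x t
    set y := u - p u with hydef
    have hyp : ⟪y, B (p u)⟫ ≤ 0 := by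
      -- the dual vector
      set d : Fin n → ℝ := L (p u) - L u with hddef
      have hdL : d = L (p u - u) := by rw [hddef, map_sub]
      have hminus : p u - u = -y := by rw [hydef]; abel
      have hdmem : d ∈ dualCone' K := by
        intro w hw
        have hw' : L.symm w ∈ K' := by simp [hK'def, hw]
        have h2 := hdual u (L.symm w) hw'
        have hrw : d ⬝ᵥ w = ⟪p u - u, L.symm w⟫ := by
          conv_lhs => rw [hdL, show w = L (L.symm w) from (L.apply_symm_apply w).symm]
          exact hdot _ _
        rw [hrw, hminus, inner_neg_left]
        simp only [hydef] at h2 ⊢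
        linarith
      have hd0 : d ⬝ᵥ L (p u) = 0 := by
        have hrw : d ⬝ᵥ L (p u) = ⟪p u - u, p u⟫ := by
          conv_lhs => rw [hdL]
          exact hdot _ _
        rw [hrw, hminus, inner_neg_left, hydef, horth u, neg_zero]
      have hst := hA (L (p u)) (hpK u) d hdmem hd0
      have hrw : d ⬝ᵥ A.mulVec (L (p u)) = ⟪p u - u, B (p u)⟫ := by
        have h1 : A.mulVec (L (p u)) = L (B (p u)) := by rw [hB]; simp
        conv_lhs => rw [h1, hdL]
        exact hdot _ _
      rw [hrw, hminus, inner_neg_left] at hst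
      linarith
    have hyy : ⟪y, B y⟫ ≤ C * ‖y‖ ^ 2 := by
      calc ⟪y, B y⟫ ≤ ‖y‖ * ‖B y‖ := real_inner_le_norm y (B y)
        _ ≤ ‖y‖ * (C * ‖y‖) := by
            apply mul_le_mul_of_nonneg_left (B.le_opNorm y) (norm_nonneg y)
        _ = C * ‖y‖ ^ 2 := by ring
    have hsplit : ⟪y, B u⟫ = ⟪y, B (p u)⟫ + ⟪y, B y⟫ := by
      have : B u = B (p u) + B y := by
        rw [hydef, map_sub]; abel
      rw [this, inner_add_right]
    have hfty : f t = ‖y‖ ^ 2 := by rw [hfdef]; simp only; rw [hinf u]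
    simp only [hf'def]
    rw [hsplit, hfty]
    nlinarith [hyp, hyy]
  -- liminf slope condition
  have hslope : ∀ t ∈ Ico 0 T, ∀ r, f' t < r →
      ∃ᶠ z in nhdsWithin t (Ioi t), (z - t)⁻¹ * (f z - f t) < r := by
    intro t _ r hr
    set φ : ℝ → ℝ := fun z => ‖x z - p (x t)‖ ^ 2 with hφdef
    have hφd : HasDerivAt φ (f' t) t := by
      have hg : HasDerivAt (fun z => x z - p (x t)) (B (x t)) t := (hx t).sub_const (p (x t))
      have h := (hg.inner ℝ hg : HasDerivAt (fun z => ⟪x z - p (x t), x z - p (x t)⟫)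
        (⟪x t - p (x t), B (x t)⟫ + ⟪B (x t), x t - p (x t)⟫) t)
      have hval : ⟪x t - p (x t), B (x t)⟫ + ⟪B (x t), x t - p (x t)⟫ = f' t := by
        simp only [hf'def]
        rw [real_inner_comm (B (x t)) (x t - p (x t))]
        ring
      rw [← hval]
      simpa only [hφdef, real_inner_self_eq_norm_sq] using h
    have hle : ∀ z, f z ≤ φ z := by
      intro z
      have h1 : Metric.infDist (x z) K' ≤ ‖x z - p (x t)‖ := by
        rw [← dist_eq_norm]; exact Metric.infDist_le_dist_of_mem (hpK (x t))
      exact pow_le_pow_left₀ Metric.infDist_nonneg h1 2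
    have hft : f t = φ t := by rw [hfdef, hφdef]; simp only; rw [hinf (x t)]
    have htend : Filter.Tendsto (fun z => (z - t)⁻¹ * (φ z - φ t)) (nhdsWithin t (Ioi t))
        (nhds (f' t)) := by
      have := (hasDerivAt_iff_tendsto_slope.1 hφd).mono_left
        (nhdsWithin_mono t (fun z hz => ne_of_gt hz : Ioi t ⊆ {t}ᶜ))
      refine this.congr (fun z => ?_)
      rw [slope_def_field, div_eq_inv_mul]
    have hev : ∀ᶠ z in nhdsWithin t (Ioi t), (z - t)⁻¹ * (φ z - φ t) < r :=
      htend.eventually_lt_const hr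
    have hevI : ∀ᶠ z in nhdsWithin t (Ioi t), (z - t)⁻¹ * (f z - f t) < r := by
      filter_upwards [hev, self_mem_nhdsWithin] with z hz hzI
      have hz0 : (0 : ℝ) ≤ (z - t)⁻¹ := inv_nonneg.2 (le_of_lt (sub_pos.2 hzI))
      calc (z - t)⁻¹ * (f z - f t) ≤ (z - t)⁻¹ * (φ z - φ t) := by
            apply mul_le_mul_of_nonneg_left _ hz0
            rw [hft]; exact sub_le_sub_right (hle z) _
        _ < r := hz
    exact hevI.frequently
  -- Gronwall
  have hf0 : f 0 ≤ 0 := by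
    have hx0 : x 0 ∈ K' := by
      simp [hxdef, hK'def]
      simpa using hx₀
    rw [hfdef]; simp only
    rw [Metric.infDist_zero_of_mem hx0]; norm_num
  have hg := le_gronwallBound_of_liminf_deriv_right_le (f := f) (f' := f')
    (δ := 0) (K := 2 * C) (ε := 0) (a := 0) (b := T) hfc hslope hf0
    (fun t _ => by rw [add_zero]; exact hbound t)
  have hfT : f T ≤ 0 := by
    have := hg T ⟨hT, le_rfl⟩
    rwa [gronwallBound_ε0_δ0] at this
  have hfT0 : Metric.infDist (x T) K' = 0 := by
    have hfT' : Metric.infDist (x T) K' ^ 2 ≤ 0 := hfT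
    have h2 : Metric.infDist (x T) K' ^ 2 = 0 := le_antisymm hfT' (sq_nonneg _)
    exact pow_eq_zero_iff two_ne_zero |>.mp h2
  have : x T ∈ K' := (hclosed'.mem_iff_infDist_zero hne').2 hfT0
  have := this
  simpa [hK'def, hxdef] using this
end
end
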